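/- For positive reals r_i, r_j, r_k, r_ℓ, if Q_ijkℓ = (Σ 1/r_a)² - 2 Σ 1/r_a², and r_ijkℓ is defined by 4/r_ijkℓ² = Q_ijkℓ (assuming Q_ijkℓ > 0), then the squared height h² = r_ijkℓ² - r_ijk², where r_ijk² = r_i r_j r_k/(r_i + r_j + r_k), satisfies h² = (r_ijkℓ² r_ijk²/4)(1/r_i + 1/r_j + 1/r_k - 1/r_ℓ)². -/

import Mathlib

/-- Squared height from the center of the edge-tangent sphere to a face of a
    conformal tetrahedron. -/
theorem conformal_tetrahedron_height_sq (ri rj rk rl : ℝ)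
    (hi : 0 < ri) (hj : 0 < rj) (hk : 0 < rk) (hl : 0 < rl)
    (Q : ℝ)
    (hQdef : Q = (1 / ri + 1 / rj + 1 / rk + 1 / rl) ^ 2 -
      2 * (1 / ri ^ 2 + 1 / rj ^ 2 + 1 / rk ^ 2 + 1 / rl ^ 2))
    (hQ : 0 < Q)
    (rfour : ℝ) (hr4 : 4 / rfour ^ 2 = Q) (hr4pos : 0 < rfour) :
    rfour ^ 2 - ri * rj * rk / (ri + rj + rk) =
      (rfour ^ 2 * (ri * rj * rk / (ri + rj + rk)) / 4) *
        (1 / ri + 1 / rj + 1 / rk - 1 / rl) ^ 2 := by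
  have hs : 0 < ri + rj + rk := by positivity
  set F : ℝ := ri * rj * rk / (ri + rj + rk) with hF
  have hFpos : 0 < F := by positivity
  have key : (1 / ri + 1 / rj + 1 / rk - 1 / rl) ^ 2 = 4 / F - Q := by
    rw [hQdef, hF]
    field_simp
    ring
  have hA : rfour ^ 2 * Q = 4 := by
    field_simp at hr4; linarith
  rw [key]
  have hApos : (0:ℝ) < rfour ^ 2 := by positivity
  field_simp
  linear_combination F * hA
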